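/- Let P, Q, M, N ∈ ℂ^{n×n} with P M = Q N, let M + N be invertible, and set H := (N - M)(M + N)^{-1}. If I - H* H is positive semidefinite, then (P+Q)(P+Q)* - (P-Q)(P-Q)* is positive semidefinite, and hence P Q* + Q P* is positive semidefinite. -/

import Mathlib

open Matrix
open scoped ComplexOrder

/-- If `1 - Aᴴ A` is PSD, then `1 - A Aᴴ` is PSD. -/
lemma aux_flip {n : ℕ} (A : Matrix (Fin n) (Fin n) ℂ)
    (h : (1 - Aᴴ * A).PosSemidef) : (1 - A * Aᴴ).PosSemidef := by
  have herm : (1 - A * Aᴴ).IsHermitian := by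
    simp [Matrix.IsHermitian, Matrix.conjTranspose_sub, Matrix.conjTranspose_mul]
  refine .of_dotProduct_mulVec_nonneg herm fun x => ?_
  classical
  set e : (Fin n → ℂ) → EuclideanSpace ℂ (Fin n) := fun v => (WithLp.equiv 2 _).symm v with he
  have key : ∀ v : Fin n → ℂ, star v ⬝ᵥ v = ((‖e v‖ : ℂ)) ^ 2 := by
    intro v
    rw [show star v ⬝ᵥ v = (inner ℂ (e v) (e v) : ℂ) from dotProduct_comm _ _]
    exact inner_self_eq_norm_sq_to_K (𝕜 := ℂ) (e v)
  have inner_eq : ∀ v w : Fin n → ℂ, (inner ℂ (e v) (e w) : ℂ) = star v ⬝ᵥ w := by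
    intro v w
    exact dotProduct_comm _ _
  -- from hypothesis: ‖A *ᵥ y‖ ≤ ‖y‖ for all y
  have hle : ∀ y : Fin n → ℂ, ‖e (A *ᵥ y)‖ ≤ ‖e y‖ := by
    intro y
    have h0 := h.dotProduct_mulVec_nonneg y
    rw [Matrix.sub_mulVec, Matrix.one_mulVec, dotProduct_sub] at h0
    have h1 : star y ⬝ᵥ ((Aᴴ * A) *ᵥ y) = star (A *ᵥ y) ⬝ᵥ (A *ᵥ y) := by
      simp [← Matrix.mulVec_mulVec, Matrix.dotProduct_mulVec, Matrix.star_mulVec]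
    rw [h1, key, key] at h0
    have : (0:ℝ) ≤ ‖e y‖ ^ 2 - ‖e (A *ᵥ y)‖ ^ 2 := by
      have := h0
      rw [← Complex.ofReal_pow, ← Complex.ofReal_pow, ← Complex.ofReal_sub] at this
      exact_mod_cast Complex.zero_le_real.mp this
    nlinarith [norm_nonneg (e y), norm_nonneg (e (A *ᵥ y))]
  -- main computation for x
  have h1 : star x ⬝ᵥ ((A * Aᴴ) *ᵥ x) = star (Aᴴ *ᵥ x) ⬝ᵥ (Aᴴ *ᵥ x) := by
    simp [← Matrix.mulVec_mulVec, Matrix.dotProduct_mulVec, Matrix.star_mulVec]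
  set y := Aᴴ *ᵥ x with hy
  -- ‖e y‖ ≤ ‖e x‖ via Cauchy–Schwarz
  have hsq : (‖e y‖:ℝ) ^ 2 = ‖(inner ℂ (e x) (e (A *ᵥ y)) : ℂ)‖ := by
    have : (inner ℂ (e x) (e (A *ᵥ y)) : ℂ) = star y ⬝ᵥ y := by
      rw [inner_eq, hy]
      simp [Matrix.dotProduct_mulVec, Matrix.star_mulVec]
    rw [this, key]
    simp
  have hxy : ‖e y‖ ^ 2 ≤ ‖e x‖ * ‖e y‖ := by
    calc ‖e y‖ ^ 2 = ‖(inner ℂ (e x) (e (A *ᵥ y)) : ℂ)‖ := hsq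
      _ ≤ ‖e x‖ * ‖e (A *ᵥ y)‖ := norm_inner_le_norm _ _
      _ ≤ ‖e x‖ * ‖e y‖ := by
          exact mul_le_mul_of_nonneg_left (hle y) (norm_nonneg _)
  have hyx : ‖e y‖ ≤ ‖e x‖ := by
    rcases eq_or_lt_of_le (norm_nonneg (e y)) with h0 | h0
    · rw [← h0]; exact norm_nonneg _
    · nlinarith
  rw [Matrix.sub_mulVec, Matrix.one_mulVec, dotProduct_sub, h1, key, key]
  rw [← Complex.ofReal_pow, ← Complex.ofReal_pow, ← Complex.ofReal_sub]
  rw [Complex.zero_le_real]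
  nlinarith [norm_nonneg (e y), norm_nonneg (e x)]

theorem stmt_5 (n : ℕ) (P Q M N : Matrix (Fin n) (Fin n) ℂ)
    (hPMQN : P * M = Q * N) (hMN : IsUnit (M + N))
    (hH : (1 - ((N - M) * (M + N)⁻¹)ᴴ * ((N - M) * (M + N)⁻¹)).PosSemidef) :
    ((P + Q) * (P + Q)ᴴ - (P - Q) * (P - Q)ᴴ).PosSemidef ∧
      (P * Qᴴ + Q * Pᴴ).PosSemidef := by
  set H := (N - M) * (M + N)⁻¹ with hHdef
  have hinv : (M + N) * (M + N)⁻¹ = 1 :=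
    Matrix.mul_nonsing_inv _ ((Matrix.isUnit_iff_isUnit_det _).mp hMN)
  have h1 : (P + Q) * (N - M) = (P - Q) * (M + N) := by
    simp only [add_mul, sub_mul, mul_add, mul_sub, hPMQN]
    abel
  have h2 : (P + Q) * H = P - Q := by
    calc (P + Q) * ((N - M) * (M + N)⁻¹) = ((P + Q) * (N - M)) * (M + N)⁻¹ := by
          rw [mul_assoc]
      _ = (P - Q) * ((M + N) * (M + N)⁻¹) := by rw [h1, mul_assoc]
      _ = P - Q := by rw [hinv, mul_one]
  have hpsd := (aux_flip H hH).mul_mul_conjTranspose_same (P + Q)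
  have heq : (P + Q) * (1 - H * Hᴴ) * (P + Q)ᴴ
      = (P + Q) * (P + Q)ᴴ - (P - Q) * (P - Q)ᴴ := by
    rw [mul_sub, mul_one, sub_mul]
    congr 1
    rw [← h2]
    simp only [Matrix.conjTranspose_mul]
    noncomm_ring
  rw [heq] at hpsd
  refine ⟨hpsd, ?_⟩
  have hD : (P + Q) * (P + Q)ᴴ - (P - Q) * (P - Q)ᴴ = (2:ℂ) • (P * Qᴴ + Q * Pᴴ) := by
    simp only [Matrix.conjTranspose_add, Matrix.conjTranspose_sub, add_mul, sub_mul,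
      mul_add, mul_sub, two_smul, smul_add]
    abel
  have hrw : P * Qᴴ + Q * Pᴴ
      = (2⁻¹ : ℂ) • ((P + Q) * (P + Q)ᴴ - (P - Q) * (P - Q)ᴴ) := by
    rw [hD, smul_smul]; norm_num
  rw [hrw]
  refine .of_dotProduct_mulVec_nonneg ?_ fun x => ?_
  · rw [Matrix.IsHermitian, Matrix.conjTranspose_smul, hpsd.1.eq]
    norm_num
  · rw [Matrix.smul_mulVec, dotProduct_smul, smul_eq_mul]
    refine mul_nonneg ?_ (hpsd.dotProduct_mulVec_nonneg x)
    rw [show ((2:ℂ)⁻¹) = ((2⁻¹:ℝ):ℂ) by norm_num, Complex.zero_le_real]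
    norm_num
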